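/- Let D = {x ∈ ωω : ∀n ∃m > n (x(m) ≠ 0)}, and define f : ωω → ωω by: f(x) is the subsequence of x consisting of its nonzero values (i.e., f(x) = ⟨x(n) : n ∈ N_x⟩ where N_x = {n : x(n) ≠ 0}) if x ∈ D, and f(x) is the constant 0 sequence otherwise. Then for any partition ⟨C_n : n ∈ ω⟩ of ωω and any family of functions {f_n : n ∈ ω} with f restricted to C_n equal to f_n restricted to C_n for each n, there exists n₀ such that f_{n₀} is not continuous on ωω. -/

import Mathlib

open scoped Classical

/-- The set of sequences with infinitely many nonzero values. -/
def Dset : Set (ℕ → ℕ) := {x | ∀ n, ∃ m > n, x m ≠ 0}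

/-- `f(x)` is the subsequence of nonzero values of `x` (in increasing order of
position) if `x ∈ D`, and the constant `0` sequence otherwise. -/
noncomputable def fsub : (ℕ → ℕ) → ℕ → ℕ := fun x =>
  if x ∈ Dset then fun n => x (Nat.nth (fun m => x m ≠ 0) n) else fun _ => 0

/-- Every neighborhood in Baire space contains a cylinder. -/
lemma cylinder_subset_of_mem_nhds {U : Set (ℕ → ℕ)} {x : ℕ → ℕ} (h : U ∈ nhds x) :
    ∃ N : ℕ, ∀ y : ℕ → ℕ, (∀ i < N, y i = x i) → y ∈ U := by
  rw [nhds_pi, Filter.mem_pi] at h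
  obtain ⟨I, hIfin, t, ht, hsub⟩ := h
  refine ⟨hIfin.toFinset.sup id + 1, fun y hy => hsub ?_⟩
  intro i hi
  have hiN : i < hIfin.toFinset.sup id + 1 := by
    have : i ≤ hIfin.toFinset.sup id := Finset.le_sup (f := id) (hIfin.mem_toFinset.2 hi)
    omega
  rw [hy i hiN]
  exact mem_of_mem_nhds (ht i)

theorem stmt15 (C : ℕ → Set (ℕ → ℕ)) (fs : ℕ → (ℕ → ℕ) → ℕ → ℕ)
    (hdisj : Pairwise (Function.onFun Disjoint C)) (hcover : (⋃ n, C n) = Set.univ)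
    (hagree : ∀ n, ∀ x ∈ C n, fsub x = fs n x) :
    ∃ n₀, ¬ Continuous (fs n₀) := by
  by_contra hcont
  push_neg at hcont
  -- the eventually-zero sequences, a countable family of closed sets covering Dsetᶜ
  set A : ℕ → Set (ℕ → ℕ) := fun n => {x | ∀ m, n < m → x m = 0} with hA
  have hAclosed : ∀ n, IsClosed (A n) := by
    intro n
    have : A n = ⋂ m ∈ {m | n < m}, (fun x : ℕ → ℕ => x m) ⁻¹' {0} := by
      ext x; simp [hA, Set.mem_iInter]
    rw [this]
    exact isClosed_biInter fun m _ => IsClosed.preimage (continuous_apply m) isClosed_singleton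
  have hcover' : (⋃ i : ℕ ⊕ ℕ, Sum.elim (fun n => closure (C n ∩ Dset)) A i) = Set.univ := by
    apply Set.eq_univ_of_forall
    intro x
    by_cases hxD : x ∈ Dset
    · have : x ∈ ⋃ n, C n := hcover ▸ Set.mem_univ x
      obtain ⟨n, hn⟩ := Set.mem_iUnion.1 this
      exact Set.mem_iUnion.2 ⟨Sum.inl n, subset_closure ⟨hn, hxD⟩⟩
    · simp only [Dset, Set.mem_setOf_eq, not_forall] at hxD
      obtain ⟨n, hn⟩ := hxD
      push_neg at hn
      refine Set.mem_iUnion.2 ⟨Sum.inr n, ?_⟩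
      intro m hm
      exact hn m hm
  obtain ⟨i, hi⟩ := nonempty_interior_of_iUnion_of_closed
    (f := fun i : ℕ ⊕ ℕ => Sum.elim (fun n => closure (C n ∩ Dset)) A i)
    (fun i => by cases i with
      | inl n => exact isClosed_closure
      | inr n => exact hAclosed n) hcover'
  cases i with
  | inr n =>
    -- A n has empty interior: derive a contradiction
    obtain ⟨z, hz⟩ := hi
    obtain ⟨N, hN⟩ := cylinder_subset_of_mem_nhds (isOpen_interior.mem_nhds hz)
    set y : ℕ → ℕ := Function.update z (max N (n + 1)) 1 with hy
    have hyA : y ∈ A n := by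
      have : y ∈ interior (Sum.elim (fun n => closure (C n ∩ Dset)) A (Sum.inr n)) := by
        apply hN
        intro i hiN
        rw [hy, Function.update_of_ne (by omega)]
      exact interior_subset this
    have h1 : y (max N (n + 1)) = 0 := hyA _ (by omega)
    rw [hy, Function.update_self] at h1
    exact one_ne_zero h1
  | inl n₀ =>
    -- main case
    obtain ⟨x, hx⟩ := hi
    obtain ⟨N, hN⟩ := cylinder_subset_of_mem_nhds (isOpen_interior.mem_nhds hx)
    have hNcl : ∀ y : ℕ → ℕ, (∀ i < N, y i = x i) → y ∈ closure (C n₀ ∩ Dset) := by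
      intro y hy
      exact interior_subset (hN y hy)
    set j : ℕ := Nat.count (fun i => x i ≠ 0) N with hj
    set z : ℕ → ℕ := fun i => if i < N then x i else 0 with hzdef
    -- for every v ≠ 0, fs n₀ z j = v
    have main : ∀ v : ℕ, v ≠ 0 → fs n₀ z j = v := by
      intro v hv
      -- choose witnesses in C n₀ ∩ Dset close to s⌢0^m⌢v
      have key : ∀ m : ℕ, ∃ y, y ∈ C n₀ ∩ Dset ∧ ∀ i < N + m + 1,
          y i = if i < N then x i else if i = N + m then v else 0 := by
        intro m
        set w : ℕ → ℕ := fun i => if i < N then x i else if i = N + m then v else 0 with hw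
        set U : Set (ℕ → ℕ) := {y | ∀ i < N + m + 1, y i = w i} with hU
        have hUopen : IsOpen U := by
          have : U = ⋂ i ∈ Finset.range (N + m + 1), (fun y : ℕ → ℕ => y i) ⁻¹' {w i} := by
            ext y; simp [hU, Set.mem_iInter]
          rw [this]
          exact isOpen_biInter_finset fun i _ =>
            IsOpen.preimage (continuous_apply i) (isOpen_discrete _)
        have hwU : w ∈ U := fun i _ => rfl
        have hwcl : w ∈ closure (C n₀ ∩ Dset) := by
          apply hNcl
          intro i hiN
          simp [hw, hiN]
        obtain ⟨y, hyU, hyC⟩ := mem_closure_iff.1 hwcl U hUopen hwU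
        exact ⟨y, hyC, hyU⟩
      choose y hyC hyval using key
      -- compute fs n₀ (y m) j = v
      have hcomp : ∀ m : ℕ, fs n₀ (y m) j = v := by
        intro m
        have hyD : y m ∈ Dset := (hyC m).2
        set p : ℕ → Prop := fun k => y m k ≠ 0 with hp
        have hpNm : p (N + m) := by
          have := hyval m (N + m) (by omega)
          simp only [if_neg (by omega : ¬ N + m < N), if_pos rfl] at this
          rw [hp]; simp [this, hv]
        -- count p (N + m) = j
        have hcount : ∀ m' : ℕ, m' ≤ m → Nat.count p (N + m') = j := by
          intro m' hm'
          induction m' with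
          | zero =>
            simp only [Nat.add_zero, hj]
            rw [Nat.count_eq_card_filter_range, Nat.count_eq_card_filter_range]
            congr 1
            apply Finset.filter_congr
            intro i hiN
            rw [Finset.mem_range] at hiN
            have := hyval m i (by omega)
            rw [if_pos hiN] at this
            simp [hp, this]
          | succ k ih =>
            rw [Nat.add_succ, Nat.count_succ, ih (by omega)]
            have hzero : ¬ p (N + k) := by
              have := hyval m (N + k) (by omega)
              rw [if_neg (by omega : ¬ N + k < N), if_neg (by omega : ¬ N + k = N + m)] at this
              simp [hp, this]
            simp [hzero]
        have hnth : Nat.nth p j = N + m := by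
          have := Nat.nth_count (p := p) hpNm
          rwa [hcount m le_rfl] at this
        have : fsub (y m) = fs n₀ (y m) := hagree n₀ (y m) (hyC m).1
        rw [← this, fsub, if_pos hyD]
        show y m (Nat.nth p j) = v
        rw [hnth]
        have := hyval m (N + m) (by omega)
        rwa [if_neg (by omega : ¬ N + m < N), if_pos rfl] at this
      -- y m → z
      have htend : Filter.Tendsto y Filter.atTop (nhds z) := by
        rw [tendsto_pi_nhds]
        intro i
        apply Filter.Tendsto.congr' (f₁ := fun _ => z i) _ tendsto_const_nhds
        filter_upwards [Filter.eventually_ge_atTop (i + 1)] with m hm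
        have := hyval m i (by omega)
        by_cases hiN : i < N
        · rw [if_pos hiN] at this; simp [hzdef, hiN, this.symm]
        · rw [if_neg hiN, if_neg (by omega : ¬ i = N + m)] at this
          simp [hzdef, hiN, this.symm]
      have := ((hcont n₀).tendsto z).comp htend
      have hcoord : Filter.Tendsto (fun m => fs n₀ (y m) j) Filter.atTop
          (nhds (fs n₀ z j)) := ((continuous_apply j).tendsto _).comp this
      have hconst : Filter.Tendsto (fun m => fs n₀ (y m) j) Filter.atTop (nhds v) := by
        simp only [hcomp]
        exact tendsto_const_nhds
      exact tendsto_nhds_unique hcoord hconst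
    have h1 := main 1 one_ne_zero
    have h2 := main 2 two_ne_zero
    rw [h1] at h2
    omega
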